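/- Let k ≥ 2 and L ≥ 0 be integers and n ≥ 2 with k^L ≤ ((k−1)/(k+3))·n. Sample a random relation-tracing graph on [n]. Fix, before the graph is sampled, a decision function D : {0,1}* × [n] × 𝓡 → {0,1}. Suppose that after observing the graph one assigns finite binary strings x_1,…,x_n (each a function of the sampled permutations) to the vertices such that for every t, s ∈ [n] and every r ∈ 𝓡, D(x_t, s, r) = 1 if and only if t = σ_r(s). Then, writing |x_t| for the bit-length of x_t, E[(1/n)·Σ_{t=1}^n |x_t|] ≥ (1/4)·k^L·log₂(n/k) − 1/2, where the expectation is over the random graph. -/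

import Mathlib

open scoped Classical
open Finset

/-- `traceP σ r` is the composite permutation `σ_{r_ℓ} ∘ ⋯ ∘ σ_{r_1}` for the
sequence of relation types `r = (r_1, …, r_ℓ)` (the identity when `r = []`). -/
def traceP {n k : ℕ} (σ : Fin k → Equiv.Perm (Fin n)) : List (Fin k) → Equiv.Perm (Fin n)
  | [] => 1
  | j :: rest => traceP σ rest * σ j

namespace RTG

variable {n k : ℕ}


variable {k : ℕ}

/-- geometric partial sum `1 + k + ... + k^(ℓ-1)` -/
def geoS (k ℓ : ℕ) : ℕ := ∑ i ∈ Finset.range ℓ, k ^ i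

lemma geoS_succ (ℓ : ℕ) : geoS k (ℓ+1) = geoS k ℓ + k ^ ℓ := by
  simp [geoS, Finset.sum_range_succ]

lemma geoS_mono {a b : ℕ} (h : a ≤ b) : geoS k a ≤ geoS k b := by
  unfold geoS
  exact Finset.sum_le_sum_of_subset (Finset.range_subset_range.2 h)

lemma geoS_mul (hk : 1 ≤ k) (ℓ : ℕ) : (k - 1) * geoS k ℓ + 1 = k ^ ℓ := by
  induction ℓ with
  | zero => simp [geoS]
  | succ m ih =>
      rw [geoS_succ, Nat.mul_add, Nat.add_right_comm, ih, pow_succ]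
      have h2 : k ^ m + (k - 1) * k ^ m = ((k-1)+1) * k ^ m := by ring
      rw [h2, Nat.sub_add_cancel hk]
      ring

/-- encoding of positions: shortlex-compatible -/
def enc : List (Fin k) → ℕ
  | [] => 0
  | c :: u => (c.1 + 1) * k ^ u.length + enc u

lemma geoS_le_enc (u : List (Fin k)) : geoS k u.length ≤ enc u := by
  induction u with
  | nil => simp [geoS]
  | cons c u ih =>
      have : geoS k (u.length + 1) = geoS k u.length + k ^ u.length := geoS_succ _
      have h1 : 1 * k ^ u.length ≤ (c.1 + 1) * k ^ u.length :=
        Nat.mul_le_mul_right _ (by omega)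
      simp only [enc, List.length_cons]
      omega

lemma enc_lt_geoS (hk : 1 ≤ k) (u : List (Fin k)) : enc u < geoS k (u.length + 1) := by
  induction u with
  | nil => simp [enc, geoS]
  | cons c u ih =>
      have hc : c.1 + 1 ≤ k := c.2
      have h1 : (c.1 + 1) * k ^ u.length ≤ k * k ^ u.length :=
        Nat.mul_le_mul_right _ hc
      have h2 : geoS k (u.length + 1 + 1) = geoS k (u.length + 1) + k ^ (u.length + 1) :=
        geoS_succ _
      have h3 : k ^ (u.length + 1) = k * k ^ u.length := by ring
      simp only [enc, List.length_cons]
      omega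

lemma enc_lt_of_length_lt (hk : 1 ≤ k) {u v : List (Fin k)} (h : u.length < v.length) :
    enc u < enc v := by
  calc enc u < geoS k (u.length + 1) := enc_lt_geoS hk u
    _ ≤ geoS k v.length := geoS_mono h
    _ ≤ enc v := geoS_le_enc v

lemma length_le_of_enc_lt (hk : 1 ≤ k) {u v : List (Fin k)} (h : enc u < enc v) :
    u.length ≤ v.length := by
  by_contra hc
  have := enc_lt_of_length_lt hk (u := v) (v := u) (by omega)
  omega

lemma enc_cons_lt_iff (hk : 1 ≤ k) (j : Fin k) {u v : List (Fin k)} :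
    enc (j :: u) < enc (j :: v) ↔ enc u < enc v := by
  rcases lt_trichotomy u.length v.length with h | h | h
  · constructor <;> intro _
    · exact enc_lt_of_length_lt hk h
    · exact enc_lt_of_length_lt hk (by simp [h])
  · simp only [enc, h]
    omega
  · have h1 : ¬ enc u < enc v := by
      have := enc_lt_of_length_lt hk (u := v) (v := u) h
      omega
    have h2 : ¬ enc (j :: u) < enc (j :: v) := by
      have := enc_lt_of_length_lt hk (u := j :: v) (v := j :: u) (by simp [h])
      omega
    tauto

lemma enc_inj (hk : 1 ≤ k) : Function.Injective (enc (k := k)) := by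
  intro u v h
  induction u generalizing v with
  | nil =>
      cases v with
      | nil => rfl
      | cons d v =>
          exfalso
          have := enc_lt_of_length_lt hk (u := ([] : List (Fin k))) (v := d :: v) (by simp)
          omega
  | cons c u ih =>
      cases v with
      | nil =>
          exfalso
          have := enc_lt_of_length_lt hk (u := ([] : List (Fin k))) (v := c :: u) (by simp)
          omega
      | cons d v =>
          have hlen : u.length = v.length := by
            rcases lt_trichotomy u.length v.length with hl | hl | hl
            · exfalso; have := enc_lt_of_length_lt hk (u := c :: u) (v := d :: v) (by simpa using hl); omega
            · exact hl
            · exfalso; have := enc_lt_of_length_lt hk (u := d :: v) (v := c :: u) (by simpa using hl); omega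
          have hu : enc u < geoS k (u.length + 1) := enc_lt_geoS hk u
          have hv : enc v < geoS k (v.length + 1) := enc_lt_geoS hk v
          have hu2 : geoS k u.length ≤ enc u := geoS_le_enc u
          have hv2 : geoS k v.length ≤ enc v := geoS_le_enc v
          have hgs : geoS k (u.length + 1) = geoS k u.length + k ^ u.length := geoS_succ _
          simp only [enc, hlen] at h
          rw [hlen] at hu hu2 hgs
          have hgs2 : geoS k (v.length + 1) = geoS k v.length + k ^ v.length := geoS_succ _
          have hcd : c.1 = d.1 := by
            rcases lt_trichotomy c.1 d.1 with hl | hl | hl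
            · exfalso
              have hm : (c.1+2) * k^v.length ≤ (d.1+1)*k^v.length :=
                Nat.mul_le_mul_right _ (by omega)
              have e1 : (c.1+2) * k^v.length = (c.1+1)*k^v.length + k^v.length := by ring
              linarith
            · exact hl
            · exfalso
              have hm : (d.1+2) * k^v.length ≤ (c.1+1)*k^v.length :=
                Nat.mul_le_mul_right _ (by omega)
              have e1 : (d.1+2) * k^v.length = (d.1+1)*k^v.length + k^v.length := by ring
              linarith
          have : (c : Fin k) = d := Fin.ext hcd
          subst this
          have : enc u = enc v := by omega
          rw [ih this]

/-- lists of length exactly m -/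
def lvlF (k : ℕ) : ℕ → Finset (List (Fin k))
  | 0 => {[]}
  | (m+1) => (Finset.univ ×ˢ lvlF k m).image fun p => p.1 :: p.2

lemma mem_lvlF {m : ℕ} {u : List (Fin k)} : u ∈ lvlF k m ↔ u.length = m := by
  induction m generalizing u with
  | zero => cases u <;> simp [lvlF]
  | succ m ih =>
      cases u with
      | nil => simp [lvlF]
      | cons c u =>
          simp only [lvlF, Finset.mem_image, Finset.mem_product, List.length_cons]
          constructor
          · rintro ⟨⟨p1, p2⟩, ⟨-, hp⟩, heq⟩
            cases heq
            have := ih.1 hp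
            omega
          · intro h
            refine ⟨(c, u), ⟨Finset.mem_univ _, ih.2 ?_⟩, rfl⟩
            show u.length = m
            omega

lemma card_lvlF (m : ℕ) : (lvlF k m).card = k ^ m := by
  induction m with
  | zero => simp [lvlF]
  | succ m ih =>
      rw [lvlF, Finset.card_image_of_injective _ (by intro a b h; cases a; cases b; simpa using h),
        Finset.card_product, ih]
      simp [pow_succ]
      ring

/-- positions of length at most m -/
def PF (k m : ℕ) : Finset (List (Fin k)) := (Finset.range (m+1)).biUnion (fun ℓ => lvlF k ℓ)

lemma mem_PF {m : ℕ} {u : List (Fin k)} : u ∈ PF k m ↔ u.length ≤ m := by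
  simp only [PF, Finset.mem_biUnion, Finset.mem_range, mem_lvlF]
  constructor
  · rintro ⟨ℓ, h1, h2⟩; omega
  · intro h; exact ⟨u.length, by omega, rfl⟩

lemma card_PF (m : ℕ) : (PF k m).card = geoS k (m+1) := by
  rw [PF, Finset.card_biUnion, geoS]
  · exact Finset.sum_congr rfl fun ℓ _ => card_lvlF ℓ
  · intro a _ b _ hab
    simp only [Finset.disjoint_left, mem_lvlF]
    intro u h1 h2
    exact hab (h1.symm.trans h2)



/-- the backward trace value at a position -/
def nu (σ : Fin k → Equiv.Perm (Fin n)) (t : Fin n) (r : List (Fin k)) : Fin n :=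
  (traceP σ r)⁻¹ t

lemma nu_nil (σ : Fin k → Equiv.Perm (Fin n)) (t : Fin n) : nu σ t [] = t := by
  simp [nu, traceP]

lemma nu_cons (σ : Fin k → Equiv.Perm (Fin n)) (t : Fin n) (c : Fin k) (u : List (Fin k)) :
    nu σ t (c :: u) = (σ c)⁻¹ (nu σ t u) := by
  simp [nu, traceP, mul_inv_rev]

lemma apply_nu_cons (σ : Fin k → Equiv.Perm (Fin n)) (t : Fin n) (c : Fin k)
    (u : List (Fin k)) : σ c (nu σ t (c :: u)) = nu σ t u := by
  rw [nu_cons]; simp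

/-- number of permutations extending a partial permutation -/
lemma card_extensions (s : Finset (Fin n)) (g : Equiv.Perm (Fin n)) :
    (Finset.univ.filter fun σ : Equiv.Perm (Fin n) => ∀ x ∈ s, σ x = g x).card
      = (n - s.card).factorial := by
  induction s using Finset.induction_on with
  | empty =>
      simp only [Finset.notMem_empty, false_implies, implies_true, Finset.filter_true,
        Finset.card_univ, Finset.card_empty, Nat.sub_zero]
      rw [Fintype.card_perm, Fintype.card_fin]
  | @insert a s ha ih =>
      set E := Finset.univ.filter fun σ : Equiv.Perm (Fin n) => ∀ x ∈ s, σ x = g x with hE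
      set B : Finset (Fin n) := Finset.univ \ s.image g with hB
      have hmapB : ∀ σ ∈ E, σ a ∈ B := by
        intro σ hσ
        simp only [hB, Finset.mem_sdiff, Finset.mem_univ, true_and, Finset.mem_image]
        rintro ⟨x, hx, hgx⟩
        have hσx : σ x = g x := by
          simp only [hE, Finset.mem_filter] at hσ
          exact hσ.2 x hx
        have : σ a = σ x := by rw [hσx, hgx]
        exact ha ((σ.injective this) ▸ hx)
      have key : ∀ b1 ∈ B, ∀ b2 ∈ B,
          (E.filter fun σ => σ a = b1).card = (E.filter fun σ => σ a = b2).card := by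
        intro b1 hb1 b2 hb2
        simp only [hB, Finset.mem_sdiff, Finset.mem_univ, true_and, Finset.mem_image] at hb1 hb2
        apply Finset.card_bij (fun σ _ => Equiv.swap b1 b2 * σ)
        · intro σ hσ
          simp only [Finset.mem_filter] at hσ ⊢
          obtain ⟨hσE, hσa⟩ := hσ
          refine ⟨?_, ?_⟩
          · simp only [hE, Finset.mem_filter, Finset.mem_univ, true_and] at hσE ⊢
            intro x hx
            have := hσE x hx
            rw [Equiv.Perm.mul_apply, this,
              Equiv.swap_apply_of_ne_of_ne (fun hc => hb1 ⟨x, hx, hc⟩)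
                (fun hc => hb2 ⟨x, hx, hc⟩)]
          · rw [Equiv.Perm.mul_apply, hσa, Equiv.swap_apply_left]
        · intro σ1 h1 σ2 h2 h
          exact mul_left_cancel h
        · intro τ hτ
          refine ⟨Equiv.swap b1 b2 * τ, ?_, ?_⟩
          · simp only [Finset.mem_filter] at hτ ⊢
            obtain ⟨hτE, hτa⟩ := hτ
            refine ⟨?_, ?_⟩
            · simp only [hE, Finset.mem_filter, Finset.mem_univ, true_and] at hτE ⊢
              intro x hx
              have := hτE x hx
              rw [Equiv.Perm.mul_apply, this,
                Equiv.swap_apply_of_ne_of_ne (fun hc => hb1 ⟨x, hx, hc⟩)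
                  (fun hc => hb2 ⟨x, hx, hc⟩)]
            · rw [Equiv.Perm.mul_apply, hτa, Equiv.swap_apply_right]
          · rw [← mul_assoc, Equiv.swap_mul_self, one_mul]
      have hsum : E.card = ∑ b ∈ B, (E.filter fun σ => σ a = b).card :=
        Finset.card_eq_sum_card_fiberwise hmapB
      have hga : g a ∈ B := by
        simp only [hB, Finset.mem_sdiff, Finset.mem_univ, true_and, Finset.mem_image]
        rintro ⟨x, hx, hgx⟩
        exact ha ((g.injective hgx) ▸ hx)
      have hconst : E.card = B.card * (E.filter fun σ => σ a = g a).card := by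
        rw [hsum, Finset.sum_congr rfl (fun b hb => key b hb (g a) hga),
          Finset.sum_const, smul_eq_mul]
      have hBcard : B.card = n - s.card := by
        rw [hB, Finset.card_sdiff_of_subset (Finset.subset_univ _),
          Finset.card_image_of_injective _ g.injective, Finset.card_univ, Fintype.card_fin]
      have hE' : (Finset.univ.filter
          fun σ : Equiv.Perm (Fin n) => ∀ x ∈ insert a s, σ x = g x)
          = E.filter fun σ => σ a = g a := by
        ext σ
        simp only [hE, Finset.mem_filter, Finset.mem_univ, true_and, Finset.mem_insert]
        constructor
        · intro h
          exact ⟨fun x hx => h x (Or.inr hx), h a (Or.inl rfl)⟩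
        · rintro ⟨h1, h2⟩ x (rfl | hx)
          · exact h2
          · exact h1 x hx
      have hcard_lt : s.card < n := by
        have h := Finset.card_le_univ (insert a s)
        rw [Finset.card_insert_of_notMem ha] at h
        simp only [Finset.card_univ, Fintype.card_fin] at h
        omega
      have hfact : (n - s.card).factorial
          = (n - s.card) * (n - s.card - 1).factorial := by
        have h1 : n - s.card = (n - s.card - 1) + 1 := by omega
        calc (n - s.card).factorial = ((n - s.card - 1) + 1).factorial := by rw [← h1]
          _ = ((n - s.card - 1) + 1) * (n - s.card - 1).factorial := Nat.factorial_succ _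
          _ = (n - s.card) * (n - s.card - 1).factorial := by rw [← h1]
      rw [hE', Finset.card_insert_of_notMem ha,
        show n - (s.card + 1) = n - s.card - 1 by omega]
      have heq := hconst
      rw [ih, hBcard] at heq
      have hpos : 0 < n - s.card := by omega
      have heq2 : (n - s.card) * (n - s.card - 1).factorial
          = (n - s.card) * (E.filter fun σ => σ a = g a).card := by
        rw [← hfact, heq]
      have heq3 := Nat.eq_of_mul_eq_mul_left hpos heq2
      rw [← heq3]

variable (t : Fin n)

/-- the ball of values at positions of length ≤ m -/
def Ball (m : ℕ) (σ : Fin k → Equiv.Perm (Fin n)) : Finset (Fin n) :=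
  (PF k m).image (nu σ t)

lemma Ball_congr {m M : ℕ} (hmM : m ≤ M) {σ σ0 : Fin k → Equiv.Perm (Fin n)}
    (h : ∀ u ∈ PF k M, nu σ t u = nu σ0 t u) : Ball t m σ = Ball t m σ0 := by
  unfold Ball
  apply Finset.image_congr
  intro u hu
  exact h u (mem_PF.2 (le_trans (mem_PF.1 hu) hmM))

lemma fiber_card_le {L : ℕ} (hL : 1 ≤ L) (σ0 : Fin k → Equiv.Perm (Fin n)) :
    (Finset.univ.filter fun σ : Fin k → Equiv.Perm (Fin n) =>
        ∀ u ∈ PF k L, nu σ t u = nu σ0 t u).card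
      ≤ ((n - (Ball t (L-1) σ0).card).factorial) ^ k := by
  set b := (Ball t (L-1) σ0).card with hb
  set S : Fin k → Finset (Equiv.Perm (Fin n)) := fun j =>
    Finset.univ.filter fun π => ∀ x ∈ (Ball t (L-1) σ0).image (fun v => (σ0 j)⁻¹ v),
      π x = σ0 j x with hS
  have hsub : (Finset.univ.filter fun σ : Fin k → Equiv.Perm (Fin n) =>
      ∀ u ∈ PF k L, nu σ t u = nu σ0 t u) ⊆ Fintype.piFinset S := by
    intro σ hσ
    simp only [Finset.mem_filter, Finset.mem_univ, true_and] at hσ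
    rw [Fintype.mem_piFinset]
    intro j
    simp only [hS, Finset.mem_filter, Finset.mem_univ, true_and]
    intro x hx
    simp only [Finset.mem_image] at hx
    obtain ⟨v, hv, hxv⟩ := hx
    simp only [Ball, Finset.mem_image] at hv
    obtain ⟨u, hu, huv⟩ := hv
    have hju : (j :: u) ∈ PF k L := by
      rw [mem_PF]
      have := mem_PF.1 hu
      simp only [List.length_cons]
      omega
    have hu' : u ∈ PF k L := by
      rw [mem_PF]
      have := mem_PF.1 hu
      omega
    have hx1 : x = nu σ0 t (j :: u) := by rw [nu_cons, huv, hxv]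
    have hx2 : x = nu σ t (j :: u) := by rw [hx1, hσ _ hju]
    have h1 : σ j x = nu σ t u := by rw [hx2, apply_nu_cons]
    have h2 : σ0 j x = nu σ0 t u := by rw [hx1, apply_nu_cons]
    rw [h1, h2, hσ _ hu']
  calc _ ≤ (Fintype.piFinset S).card := Finset.card_le_card hsub
    _ = ∏ j : Fin k, (S j).card := Fintype.card_piFinset S
    _ = ((n - b).factorial) ^ k := by
        have hj : ∀ j : Fin k, (S j).card = (n - b).factorial := by
          intro j
          rw [hS]
          simp only
          rw [card_extensions, Finset.card_image_of_injective _ (Equiv.injective _)]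
        rw [Finset.prod_congr rfl fun j _ => hj j, Finset.prod_const, Finset.card_univ,
          Fintype.card_fin]


/-! ### duplicate machinery -/

def prior (m : ℕ) (a : List (Fin k)) : Finset (List (Fin k)) :=
  (PF k m).filter fun v => enc v < enc a

def Dup (m : ℕ) (σ : Fin k → Equiv.Perm (Fin n)) (t : Fin n) (u : List (Fin k)) : Prop :=
  ∃ v ∈ prior m u, nu σ t v = nu σ t u

def FreshDup (m : ℕ) (σ : Fin k → Equiv.Perm (Fin n)) (t : Fin n) (u : List (Fin k)) : Prop :=
  u ≠ [] ∧ Dup m σ t u ∧ ¬ Dup m σ t u.tail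

lemma not_dup_nil (m : ℕ) (σ : Fin k → Equiv.Perm (Fin n)) (t : Fin n) :
    ¬ Dup m σ t [] := by
  rintro ⟨v, hv, -⟩
  simp only [prior, Finset.mem_filter] at hv
  exact absurd hv.2 (by simp [enc])

lemma dup_has_freshdup_suffix (m : ℕ) (σ : Fin k → Equiv.Perm (Fin n)) (t : Fin n) :
    ∀ u : List (Fin k), Dup m σ t u →
      ∃ a, a.IsSuffix u ∧ FreshDup m σ t a := by
  intro u
  induction u with
  | nil => intro h; exact absurd h (not_dup_nil m σ t)
  | cons c u0 ih =>
      intro h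
      by_cases h0 : Dup m σ t u0
      · obtain ⟨a, hsuf, hfd⟩ := ih h0
        exact ⟨a, hsuf.trans (List.suffix_cons c u0), hfd⟩
      · exact ⟨c :: u0, List.suffix_rfl, by simp, h, h0⟩

lemma tail_mem_prior {m : ℕ} {a : List (Fin k)} (hk : 1 ≤ k) {c : Fin k} {w : List (Fin k)}
    (h : (c :: w) ∈ prior m a) : w ∈ prior m a := by
  simp only [prior, Finset.mem_filter, mem_PF] at h ⊢
  have h1 : enc w < enc (c :: w) :=
    enc_lt_of_length_lt hk (by simp)
  refine ⟨?_, lt_trans h1 h.2⟩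
  have := h.1
  simp only [List.length_cons] at this
  omega

lemma lvlF_subset_PF (m : ℕ) : lvlF k m ⊆ PF k m := by
  intro r hr
  rw [mem_PF]
  rw [mem_lvlF] at hr
  omega

/-- nonduplicate level-m positions have distinct values, so the ball is large -/
lemma ball_ge (m : ℕ) (hk : 1 ≤ k) (σ : Fin k → Equiv.Perm (Fin n)) (t : Fin n) :
    k ^ m ≤ (Ball t m σ).card + ((lvlF k m).filter fun r => Dup m σ t r).card := by
  have hsplit := Finset.card_filter_add_card_filter_not
    (s := lvlF k m) (p := fun r => Dup m σ t r)
  have hinj : Set.InjOn (nu σ t) ((lvlF k m).filter fun r => ¬ Dup m σ t r) := by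
    intro r1 h1 r2 h2 hval
    simp only [Finset.coe_filter, Set.mem_setOf_eq, mem_lvlF] at h1 h2
    by_contra hne
    have hennes : enc r1 ≠ enc r2 := fun hc => hne (enc_inj hk hc)
    rcases Nat.lt_or_ge (enc r1) (enc r2) with hlt | hge
    · exact h2.2 ⟨r1, by
        simp only [prior, Finset.mem_filter, mem_PF]
        exact ⟨by omega, hlt⟩, hval⟩
    · exact h1.2 ⟨r2, by
        simp only [prior, Finset.mem_filter, mem_PF]
        exact ⟨by omega, by omega⟩, hval.symm⟩
  have himg : ((lvlF k m).filter fun r => ¬ Dup m σ t r).card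
      = (((lvlF k m).filter fun r => ¬ Dup m σ t r).image (nu σ t)).card :=
    (Finset.card_image_of_injOn hinj).symm
  have hsub : ((lvlF k m).filter fun r => ¬ Dup m σ t r).image (nu σ t) ⊆ Ball t m σ := by
    apply Finset.image_subset_image
    exact (Finset.filter_subset _ _).trans (lvlF_subset_PF m)
  have hle := Finset.card_le_card hsub
  rw [card_lvlF] at hsplit
  omega

/-- Main counting bound: freshly duplicated positions are rare. -/
lemma freshdup_count (m : ℕ) (hk : 1 ≤ k) (t : Fin n) (a : List (Fin k)) (ha : a.length ≤ m) :
    (n - (prior m a).card) *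
      (Finset.univ.filter fun σ : Fin k → Equiv.Perm (Fin n) => FreshDup m σ t a).card
      ≤ (prior m a).card * Fintype.card (Fin k → Equiv.Perm (Fin n)) := by
  cases a with
  | nil =>
      have h0 : (Finset.univ.filter
          fun σ : Fin k → Equiv.Perm (Fin n) => FreshDup m σ t []).card = 0 := by
        rw [Finset.card_eq_zero, Finset.filter_eq_empty_iff]
        intro σ _
        rintro ⟨hne, -, -⟩
        exact hne rfl
      rw [h0, Nat.mul_zero]
      exact Nat.zero_le _
  | cons j r' =>
  set Q := prior m (j :: r') with hQ
  set q := Q.card with hq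
  set Φ : (Fin k → Equiv.Perm (Fin n)) → ({v // v ∈ Q} → Fin n) :=
    fun σ v => nu σ t v.1 with hΦ
  have hNfd := Finset.card_eq_sum_card_fiberwise
    (f := Φ) (s := Finset.univ.filter fun σ => FreshDup m σ t (j :: r'))
    (t := Finset.univ) (fun x _ => Finset.mem_univ _)
  have hK := Finset.card_eq_sum_card_fiberwise
    (f := Φ) (s := (Finset.univ : Finset (Fin k → Equiv.Perm (Fin n))))
    (t := Finset.univ) (fun x _ => Finset.mem_univ _)
  have hr'Q : r' ∈ Q := by
    simp only [hQ, prior, Finset.mem_filter, mem_PF]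
    constructor
    · simp only [List.length_cons] at ha; omega
    · exact enc_lt_of_length_lt hk (by simp)
  have hper : ∀ g : {v // v ∈ Q} → Fin n,
      (n - q) * ((Finset.univ.filter
          fun σ : Fin k → Equiv.Perm (Fin n) => FreshDup m σ t (j :: r')).filter
          fun σ => Φ σ = g).card
        ≤ q * ((Finset.univ.filter
          (fun σ : Fin k → Equiv.Perm (Fin n) => Φ σ = g)).card) := by
    intro g
    set A := Finset.univ.filter (fun σ : Fin k → Equiv.Perm (Fin n) => Φ σ = g) with hA
    have hAg : ∀ σ, σ ∈ A → ∀ (v : List (Fin k)) (h : v ∈ Q), nu σ t v = g ⟨v, h⟩ := by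
      intro σ hσ v h
      have h2 := (Finset.mem_filter.1 hσ).2
      rw [funext_iff] at h2
      exact h2 ⟨v, h⟩
    by_cases hGdup : ∃ (v : List (Fin k)) (h : v ∈ Q), enc v < enc r' ∧ g ⟨v, h⟩ = g ⟨r', hr'Q⟩
    · -- forced case: no fresh duplicates in this atom
      have hempty : ((Finset.univ.filter
          fun σ : Fin k → Equiv.Perm (Fin n) => FreshDup m σ t (j :: r')).filter
          fun σ => Φ σ = g) = ∅ := by
        rw [Finset.eq_empty_iff_forall_notMem]
        intro σ hσ
        rw [Finset.mem_filter, Finset.mem_filter] at hσ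
        obtain ⟨⟨-, hne, hdup, hnd⟩, hg⟩ := hσ
        obtain ⟨v, hvQ, hlt, hval⟩ := hGdup
        apply hnd
        have hσA : σ ∈ A := Finset.mem_filter.2 ⟨Finset.mem_univ _, hg⟩
        refine ⟨v, ?_, ?_⟩
        · simp only [hQ, prior, Finset.mem_filter] at hvQ ⊢
          exact ⟨hvQ.1, hlt⟩
        · show nu σ t v = nu σ t r'
          rw [hAg σ hσA v hvQ, hAg σ hσA r' hr'Q, hval]
      rw [hempty]
      simp
    · -- free case: swap argument
      set vp := g ⟨r', hr'Q⟩ with hvp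
      set domJ := (Q.attach.filter fun v => ∃ w, v.1 = j :: w).image g with hdomJ
      set ψ : (Fin k → Equiv.Perm (Fin n)) → Fin n := fun σ => (σ j)⁻¹ vp with hψdef
      have hcon : ∀ σ ∈ A, ∀ (c : Fin k) (w : List (Fin k)) (h : (c :: w) ∈ Q),
          σ c (g ⟨c :: w, h⟩) = g ⟨w, tail_mem_prior hk h⟩ := by
        intro σ hσ c w h
        rw [← hAg σ hσ (c :: w) h, ← hAg σ hσ w (tail_mem_prior hk h), apply_nu_cons]
      have hψav : ∀ σ ∈ A, ψ σ ∉ domJ := by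
        intro σ hσ hmem
        simp only [hdomJ, Finset.mem_image, Finset.mem_filter, Finset.mem_attach,
          true_and] at hmem
        obtain ⟨v, ⟨w, hw⟩, hgv⟩ := hmem
        obtain ⟨vv, hvQ⟩ := v
        simp only at hw
        subst hw
        have hc := hcon σ hσ j w hvQ
        have hσψ : σ j (ψ σ) = vp := by
          rw [hψdef]
          simp
        rw [hgv, hσψ] at hc
        apply hGdup
        refine ⟨w, tail_mem_prior hk hvQ, ?_, hc.symm⟩
        have hjw : enc (j :: w) < enc (j :: r') := by
          simp only [hQ, prior, Finset.mem_filter] at hvQ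
          exact hvQ.2
        exact (enc_cons_lt_iff hk j).1 hjw
      have hswap : ∀ (w₁ w₂ : Fin n), w₁ ∉ domJ → w₂ ∉ domJ → ∀ σ ∈ A,
          (Function.update σ j (σ j * Equiv.swap w₁ w₂)) ∈ A := by
        intro w₁ w₂ h1 h2 σ hσ
        set σ' := Function.update σ j (σ j * Equiv.swap w₁ w₂) with hσ'
        have main : ∀ (v : List (Fin k)) (h : v ∈ Q), nu σ' t v = g ⟨v, h⟩ := by
          intro v
          induction v with
          | nil =>
              intro h
              rw [nu_nil]
              have := hAg σ hσ [] h
              rw [nu_nil] at this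
              exact this
          | cons c w ih =>
              intro h
              have hwQ : w ∈ Q := tail_mem_prior hk h
              have hval : σ' c (g ⟨c :: w, h⟩) = g ⟨w, hwQ⟩ := by
                by_cases hc : c = j
                · subst hc
                  have hdom : g ⟨c :: w, h⟩ ∈ domJ := by
                    simp only [hdomJ, Finset.mem_image]
                    refine ⟨⟨c :: w, h⟩, ?_, rfl⟩
                    simp only [Finset.mem_filter, Finset.mem_attach, true_and]
                    exact ⟨w, rfl⟩
                  have hne1 : g ⟨c :: w, h⟩ ≠ w₁ := fun hc2 => h1 (hc2 ▸ hdom)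
                  have hne2 : g ⟨c :: w, h⟩ ≠ w₂ := fun hc2 => h2 (hc2 ▸ hdom)
                  rw [hσ', Function.update_self, Equiv.Perm.mul_apply,
                    Equiv.swap_apply_of_ne_of_ne hne1 hne2]
                  exact hcon σ hσ c w h
                · rw [hσ', Function.update_of_ne hc]
                  exact hcon σ hσ c w h
              rw [nu_cons, ih hwQ, ← hval, Equiv.Perm.coe_inv, Equiv.symm_apply_apply]
        exact Finset.mem_filter.2 ⟨Finset.mem_univ _, funext fun v => main v.1 v.2⟩
      have hψswap : ∀ (w₁ w₂ : Fin n) (σ : Fin k → Equiv.Perm (Fin n)),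
          ψ (Function.update σ j (σ j * Equiv.swap w₁ w₂)) = Equiv.swap w₁ w₂ (ψ σ) := by
        intro w₁ w₂ σ
        rw [hψdef]
        simp only [Function.update_self, mul_inv_rev, Equiv.Perm.mul_apply]
        rw [Equiv.swap_inv]
      set U := (Finset.univ : Finset (Fin n)) \ domJ with hU
      have key : ∀ w₁ ∈ U, ∀ w₂ ∈ U,
          (A.filter fun σ => ψ σ = w₁).card = (A.filter fun σ => ψ σ = w₂).card := by
        intro w₁ hw₁ w₂ hw₂
        rw [hU, Finset.mem_sdiff] at hw₁ hw₂
        apply Finset.card_bij (fun σ _ => Function.update σ j (σ j * Equiv.swap w₁ w₂))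
        · intro σ hσ
          rw [Finset.mem_filter] at hσ ⊢
          refine ⟨hswap w₁ w₂ hw₁.2 hw₂.2 σ hσ.1, ?_⟩
          rw [hψswap, hσ.2, Equiv.swap_apply_left]
        · intro σ1 h1 σ2 h2 heq
          funext c
          by_cases hc : c = j
          · subst hc
            have e1 := congrFun heq c
            rw [Function.update_self, Function.update_self] at e1
            exact mul_right_cancel e1
          · have e1 := congrFun heq c
            rwa [Function.update_of_ne hc, Function.update_of_ne hc] at e1
        · intro τ hτ
          rw [Finset.mem_filter] at hτ
          refine ⟨Function.update τ j (τ j * Equiv.swap w₁ w₂), ?_, ?_⟩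
          · rw [Finset.mem_filter]
            refine ⟨hswap w₁ w₂ hw₁.2 hw₂.2 τ hτ.1, ?_⟩
            rw [hψswap, hτ.2, Equiv.swap_apply_right]
          · funext c
            by_cases hc : c = j
            · subst hc
              simp only [Function.update_self]
              rw [mul_assoc, Equiv.swap_mul_self, mul_one]
            · simp only [Function.update_of_ne hc]
      have hAcard : A.card = ∑ w ∈ U, (A.filter fun σ => ψ σ = w).card := by
        apply Finset.card_eq_sum_card_fiberwise
        intro σ hσ
        rw [hU, Finset.mem_coe, Finset.mem_sdiff]
        exact ⟨Finset.mem_univ _, hψav σ hσ⟩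
      set W := (Q.attach.image g) ∩ U with hW
      have hFDsub : ((Finset.univ.filter
          fun σ : Fin k → Equiv.Perm (Fin n) => FreshDup m σ t (j :: r')).filter
          fun σ => Φ σ = g) ⊆ W.biUnion (fun w => A.filter fun σ => ψ σ = w) := by
        intro σ hσ
        rw [Finset.mem_filter, Finset.mem_filter] at hσ
        obtain ⟨⟨-, -, hdup, -⟩, hg⟩ := hσ
        have hσA : σ ∈ A := Finset.mem_filter.2 ⟨Finset.mem_univ _, hg⟩
        obtain ⟨v, hv, hval⟩ := hdup
        have h1 : nu σ t (j :: r') = ψ σ := by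
          rw [nu_cons, hψdef]
          simp only
          rw [hAg σ hσA r' hr'Q]
        rw [Finset.mem_biUnion]
        refine ⟨ψ σ, ?_, ?_⟩
        · rw [hW, Finset.mem_inter]
          constructor
          · rw [Finset.mem_image]
            refine ⟨⟨v, hv⟩, Finset.mem_attach _ _, ?_⟩
            rw [← hAg σ hσA v hv, hval, h1]
          · rw [hU, Finset.mem_sdiff]
            exact ⟨Finset.mem_univ _, hψav σ hσA⟩
        · rw [Finset.mem_filter]
          exact ⟨hσA, rfl⟩
      rcases W.eq_empty_or_nonempty with hWe | ⟨w0, hw0⟩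
      · have : ((Finset.univ.filter
            fun σ : Fin k → Equiv.Perm (Fin n) => FreshDup m σ t (j :: r')).filter
            fun σ => Φ σ = g).card = 0 := by
          rw [Finset.card_eq_zero]
          rw [hWe] at hFDsub
          exact Finset.subset_empty.1 (by simpa only [Finset.biUnion_empty] using hFDsub)
        rw [this, Nat.mul_zero]
        exact Nat.zero_le _
      · have hw0U : w0 ∈ U := (Finset.mem_inter.1 (hW ▸ hw0)).2
        have hdomle : domJ.card ≤ q := by
          calc domJ.card ≤ (Q.attach.filter fun v => ∃ w, v.1 = j :: w).card :=
                Finset.card_image_le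
            _ ≤ Q.attach.card := Finset.card_filter_le _ _
            _ = q := by rw [Finset.card_attach]
        have hUcard : U.card = n - domJ.card := by
          rw [hU, Finset.card_sdiff_of_subset (Finset.subset_univ _), Finset.card_univ, Fintype.card_fin]
        have hWle : W.card ≤ q := by
          calc W.card ≤ (Q.attach.image g).card := Finset.card_le_card (Finset.inter_subset_left)
            _ ≤ Q.attach.card := Finset.card_image_le
            _ = q := by rw [Finset.card_attach]
        have hFDle : ((Finset.univ.filter
            fun σ : Fin k → Equiv.Perm (Fin n) => FreshDup m σ t (j :: r')).filter
            fun σ => Φ σ = g).card ≤ W.card * (A.filter fun σ => ψ σ = w0).card := by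
          calc _ ≤ (W.biUnion (fun w => A.filter fun σ => ψ σ = w)).card :=
                Finset.card_le_card hFDsub
            _ ≤ ∑ w ∈ W, (A.filter fun σ => ψ σ = w).card := Finset.card_biUnion_le
            _ = ∑ w ∈ W, (A.filter fun σ => ψ σ = w0).card := by
                apply Finset.sum_congr rfl
                intro w hw
                exact key w ((Finset.mem_inter.1 (hW ▸ hw)).2) w0 hw0U
            _ = W.card * (A.filter fun σ => ψ σ = w0).card := by
                rw [Finset.sum_const, smul_eq_mul]
        have hAeq : A.card = U.card * (A.filter fun σ => ψ σ = w0).card := by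
          rw [hAcard, Finset.sum_congr rfl (fun w hw => key w hw w0 hw0U),
            Finset.sum_const, smul_eq_mul]
        calc (n - q) * ((Finset.univ.filter
              fun σ : Fin k → Equiv.Perm (Fin n) => FreshDup m σ t (j :: r')).filter
              fun σ => Φ σ = g).card
            ≤ (n - q) * (W.card * (A.filter fun σ => ψ σ = w0).card) :=
              Nat.mul_le_mul_left _ hFDle
          _ ≤ q * (U.card * (A.filter fun σ => ψ σ = w0).card) := by
              rw [← Nat.mul_assoc, ← Nat.mul_assoc]
              apply Nat.mul_le_mul_right
              calc (n - q) * W.card ≤ (n - domJ.card) * q := by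
                    apply Nat.mul_le_mul
                    · omega
                    · exact hWle
                _ = q * U.card := by rw [hUcard, Nat.mul_comm]
          _ = q * A.card := by rw [hAeq]
  calc (n - q) * (Finset.univ.filter
        fun σ : Fin k → Equiv.Perm (Fin n) => FreshDup m σ t (j :: r')).card
      = ∑ g : {v // v ∈ Q} → Fin n, (n - q) * ((Finset.univ.filter
          fun σ : Fin k → Equiv.Perm (Fin n) => FreshDup m σ t (j :: r')).filter
          fun σ => Φ σ = g).card := by
        rw [hNfd, Finset.mul_sum]
    _ ≤ ∑ g : {v // v ∈ Q} → Fin n, q * ((Finset.univ.filter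
          (fun σ : Fin k → Equiv.Perm (Fin n) => Φ σ = g)).card) :=
        Finset.sum_le_sum (fun g _ => hper g)
    _ = q * Fintype.card (Fin k → Equiv.Perm (Fin n)) := by
        rw [← Finset.mul_sum, ← hK, Finset.card_univ]


lemma suffix_level_card (m : ℕ) (a : List (Fin k)) (hs : a.length ≤ m) :
    ((lvlF k m).filter fun r => a.IsSuffix r).card = k ^ (m - a.length) := by
  have heq : (lvlF k m).filter (fun r => a.IsSuffix r)
      = (lvlF k (m - a.length)).image (fun w => w ++ a) := by
    ext r
    simp only [Finset.mem_filter, mem_lvlF, Finset.mem_image]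
    constructor
    · rintro ⟨hlen, ⟨w, rfl⟩⟩
      refine ⟨w, ?_, rfl⟩
      rw [List.length_append] at hlen
      omega
    · rintro ⟨w, hw, rfl⟩
      refine ⟨by rw [List.length_append]; omega, ⟨w, rfl⟩⟩
  rw [heq, Finset.card_image_of_injective _ (fun w₁ w₂ h => List.append_cancel_right h),
    card_lvlF]

lemma dupcount_le (m : ℕ) (σ : Fin k → Equiv.Perm (Fin n)) (t : Fin n) :
    ((lvlF k m).filter fun r => Dup m σ t r).card
      ≤ ∑ a ∈ (PF k m).filter (fun a => FreshDup m σ t a), k ^ (m - a.length) := by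
  have hsub : (lvlF k m).filter (fun r => Dup m σ t r)
      ⊆ ((PF k m).filter (fun a => FreshDup m σ t a)).biUnion
          (fun a => (lvlF k m).filter fun r => a.IsSuffix r) := by
    intro r hr
    rw [Finset.mem_filter] at hr
    obtain ⟨a, hsuf, hfd⟩ := dup_has_freshdup_suffix m σ t r hr.2
    rw [Finset.mem_biUnion]
    refine ⟨a, ?_, ?_⟩
    · rw [Finset.mem_filter, mem_PF]
      refine ⟨le_trans hsuf.length_le ?_, hfd⟩
      rw [mem_lvlF.1 hr.1]
    · rw [Finset.mem_filter]; exact ⟨hr.1, hsuf⟩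
  calc ((lvlF k m).filter fun r => Dup m σ t r).card
      ≤ (((PF k m).filter (fun a => FreshDup m σ t a)).biUnion
          (fun a => (lvlF k m).filter fun r => a.IsSuffix r)).card :=
        Finset.card_le_card hsub
    _ ≤ ∑ a ∈ (PF k m).filter (fun a => FreshDup m σ t a),
          ((lvlF k m).filter fun r => a.IsSuffix r).card := Finset.card_biUnion_le
    _ = ∑ a ∈ (PF k m).filter (fun a => FreshDup m σ t a), k ^ (m - a.length) := by
        apply Finset.sum_congr rfl
        intro a ha
        rw [Finset.mem_filter, mem_PF] at ha
        exact suffix_level_card m a ha.1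

/-- prior positions of a level-ℓ position number less than `geoS k (ℓ+1) - 1`. -/
lemma prior_card_le (m : ℕ) (hk : 1 ≤ k) (a : List (Fin k)) :
    (prior m a).card ≤ geoS k (a.length + 1) - 1 := by
  have hsub : prior m a ⊆ (PF k a.length).erase a := by
    intro u hu
    simp only [prior, Finset.mem_filter] at hu
    rw [Finset.mem_erase, mem_PF]
    constructor
    · intro hc; subst hc; omega
    · exact length_le_of_enc_lt hk hu.2
  calc (prior m a).card ≤ ((PF k a.length).erase a).card := Finset.card_le_card hsub
    _ = geoS k (a.length + 1) - 1 := by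
        rw [Finset.card_erase_of_mem (mem_PF.2 le_rfl), card_PF]

/-- Master bound: the expected ball size is at least `k^m / 2`. -/
lemma sum_ball_ge (m : ℕ) (hk : 2 ≤ k) (hn : 1 ≤ n) (t : Fin n)
    (hcond : (k + 3) * k ^ (m + 1) ≤ (k - 1) * n) :
    Fintype.card (Fin k → Equiv.Perm (Fin n)) * k ^ m
      ≤ 2 * ∑ σ : Fin k → Equiv.Perm (Fin n), (Ball t m σ).card := by
  classical
  set K := Fintype.card (Fin k → Equiv.Perm (Fin n)) with hKdef
  have hk1 : 1 ≤ k := by omega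
  set s := geoS k (m + 1) - 1 with hs
  have hgeo : (k - 1) * geoS k (m+1) + 1 = k ^ (m+1) := geoS_mul hk1 _
  have hgeo_pos : 1 ≤ geoS k (m+1) := by
    have : geoS k (m+1) = geoS k m + k ^ m := geoS_succ m
    have : 1 ≤ k ^ m := Nat.one_le_pow _ _ (by omega)
    omega
  have hks : (k - 1) * s = k ^ (m+1) - k := by
    rw [hs, Nat.mul_sub, Nat.mul_one]
    omega
  -- (k+3) * s ≤ n
  have hsn : (k + 3) * s ≤ n := by
    have h1 : (k - 1) * ((k+3) * s) = (k+3) * ((k-1) * s) := by ring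
    have h2 : (k - 1) * ((k+3) * s) ≤ (k - 1) * n := by
      rw [h1, hks]
      calc (k+3) * (k ^ (m+1) - k) ≤ (k+3) * k ^ (m+1) := by
            apply Nat.mul_le_mul_left
            omega
        _ ≤ (k-1) * n := hcond
    exact Nat.le_of_mul_le_mul_left h2 (by omega)
  have hslt : s < n := by
    by_contra hc
    push_neg at hc
    have : (k+3) * n ≤ (k+3) * s := Nat.mul_le_mul_left _ hc
    have : (k+3) * n ≤ n := le_trans this hsn
    nlinarith
  -- T bound
  set T := ∑ ℓ ∈ Finset.range (m+1), (geoS k (ℓ+1) - 1) with hT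
  have hT2 : 2 * T ≤ n - s := by
    have hTa : (k-1) * T ≤ k * geoS k (m+1) := by
      rw [hT, Finset.mul_sum]
      calc ∑ ℓ ∈ Finset.range (m+1), (k-1) * (geoS k (ℓ+1) - 1)
          ≤ ∑ ℓ ∈ Finset.range (m+1), k ^ (ℓ+1) := by
            apply Finset.sum_le_sum
            intro ℓ _
            have := geoS_mul hk1 (ℓ+1)
            have hp : 1 ≤ geoS k (ℓ+1) := by
              have : geoS k (ℓ+1) = geoS k ℓ + k ^ ℓ := geoS_succ ℓ
              have : 1 ≤ k ^ ℓ := Nat.one_le_pow _ _ (by omega)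
              omega
            rw [Nat.mul_sub]
            omega
        _ = k * geoS k (m+1) := by
            rw [geoS, Finset.mul_sum]
            apply Finset.sum_congr rfl
            intro ℓ _
            ring
    have hTb : (k-1) * ((k-1) * T) ≤ k ^ (m+2) := by
      calc (k-1) * ((k-1) * T) ≤ (k-1) * (k * geoS k (m+1)) :=
            Nat.mul_le_mul_left _ hTa
        _ = k * ((k-1) * geoS k (m+1)) := by ring
        _ ≤ k * k ^ (m+1) := by
            apply Nat.mul_le_mul_left
            omega
        _ = k ^ (m+2) := by ring
    -- 2 * k^(m+2) ≤ (k-1)^2 * (n - s)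
    have hc2 : 2 * k ^ (m+2) ≤ (k-1) * ((k-1) * (n - s)) := by
      have hstep : (k+3) * (2 * k ^ (m+2)) ≤ (k+3) * ((k-1) * ((k-1) * (n - s))) := by
        have e1 : (k+3) * (2 * k ^ (m+2)) = 2 * k * ((k+3) * k ^ (m+1)) := by ring
        have e2 : 2 * k * ((k+3) * k ^ (m+1)) ≤ 2 * k * ((k-1) * n) :=
          Nat.mul_le_mul_left _ hcond
        have e3 : (k+3) * (n - s) ≥ (k+2) * n := by
          have h1 : (k+3) * (n - s) = (k+3) * n - (k+3) * s := by
            rw [Nat.mul_sub]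
          have h2 : (k+3) * n = (k+2) * n + n := by ring
          omega
        have e4 : (k+3) * ((k-1) * ((k-1) * (n - s)))
            = (k-1) * (k-1) * ((k+3) * (n-s)) := by ring
        have e5 : (k-1) * (k-1) * ((k+3) * (n-s)) ≥ (k-1) * (k-1) * ((k+2) * n) :=
          Nat.mul_le_mul_left _ e3
        have e6 : 2 * k * ((k-1) * n) ≤ (k-1) * (k-1) * ((k+2) * n) := by
          have : 2 * k * ((k-1) * n) = (2 * k * (k-1)) * n := by ring
          have h2 : (k-1) * (k-1) * ((k+2) * n) = ((k-1) * ((k-1) * (k+2))) * n := by ring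
          rw [this, h2]
          apply Nat.mul_le_mul_right
          have hkk : 2 * k ≤ (k-1) * (k+2) := by
            obtain ⟨j, rfl⟩ := Nat.exists_eq_add_of_le hk
            have h1 : 2 + j - 1 = j + 1 := by omega
            rw [h1]
            nlinarith
          calc 2 * k * (k-1) = (k-1) * (2 * k) := by ring
            _ ≤ (k-1) * ((k-1) * (k+2)) := Nat.mul_le_mul_left _ hkk
        omega
      exact Nat.le_of_mul_le_mul_left hstep (by omega)
    have : (k-1) * ((k-1) * (2 * T)) ≤ (k-1) * ((k-1) * (n - s)) := by
      calc (k-1) * ((k-1) * (2 * T)) = 2 * ((k-1) * ((k-1) * T)) := by ring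
        _ ≤ 2 * k ^ (m+2) := Nat.mul_le_mul_left _ hTb
        _ ≤ (k-1) * ((k-1) * (n - s)) := hc2
    have hk1' : 0 < k - 1 := by omega
    exact Nat.le_of_mul_le_mul_left (Nat.le_of_mul_le_mul_left this hk1') hk1'
  -- sum of duplicate counts
  set ND : (Fin k → Equiv.Perm (Fin n)) → ℕ :=
    fun σ => ((lvlF k m).filter fun r => Dup m σ t r).card with hND
  have hdupsum : (n - s) * (∑ σ : Fin k → Equiv.Perm (Fin n), ND σ)
      ≤ K * (k ^ m * T) := by
    have hpt : ∀ σ : Fin k → Equiv.Perm (Fin n),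
        ND σ ≤ ∑ a ∈ (PF k m).filter (fun a => FreshDup m σ t a), k ^ (m - a.length) :=
      fun σ => dupcount_le m σ t
    have hstep1 : (∑ σ : Fin k → Equiv.Perm (Fin n), ND σ)
        ≤ ∑ a ∈ PF k m, k ^ (m - a.length) *
            (Finset.univ.filter fun σ : Fin k → Equiv.Perm (Fin n) =>
              FreshDup m σ t a).card := by
      calc (∑ σ : Fin k → Equiv.Perm (Fin n), ND σ)
          ≤ ∑ σ : Fin k → Equiv.Perm (Fin n),
              ∑ a ∈ (PF k m).filter (fun a => FreshDup m σ t a), k ^ (m - a.length) :=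
            Finset.sum_le_sum (fun σ _ => hpt σ)
        _ = ∑ σ : Fin k → Equiv.Perm (Fin n), ∑ a ∈ PF k m,
              (if FreshDup m σ t a then k ^ (m - a.length) else 0) := by
            apply Finset.sum_congr rfl
            intro σ _
            rw [Finset.sum_filter]
        _ = ∑ a ∈ PF k m, ∑ σ : Fin k → Equiv.Perm (Fin n),
              (if FreshDup m σ t a then k ^ (m - a.length) else 0) := Finset.sum_comm
        _ = ∑ a ∈ PF k m, k ^ (m - a.length) *
              (Finset.univ.filter fun σ : Fin k → Equiv.Perm (Fin n) =>
                FreshDup m σ t a).card := by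
            apply Finset.sum_congr rfl
            intro a _
            rw [← Finset.sum_filter, Finset.sum_const, smul_eq_mul, Nat.mul_comm]
    have hstep2 : ∀ a ∈ PF k m,
        (n - s) * (k ^ (m - a.length) *
          (Finset.univ.filter fun σ : Fin k → Equiv.Perm (Fin n) =>
            FreshDup m σ t a).card)
        ≤ k ^ (m - a.length) * ((geoS k (a.length + 1) - 1) * K) := by
      intro a ha
      have hq := prior_card_le m hk1 a
      have hqs : (prior m a).card ≤ s := by
        have h1 : geoS k (a.length + 1) ≤ geoS k (m + 1) :=
          geoS_mono (by have := mem_PF.1 ha; omega)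
        omega
      have hfc := freshdup_count m hk1 t a (mem_PF.1 ha)
      calc (n - s) * (k ^ (m - a.length) *
            (Finset.univ.filter fun σ : Fin k → Equiv.Perm (Fin n) =>
              FreshDup m σ t a).card)
          = k ^ (m - a.length) * ((n - s) *
            (Finset.univ.filter fun σ : Fin k → Equiv.Perm (Fin n) =>
              FreshDup m σ t a).card) := by ring
        _ ≤ k ^ (m - a.length) * ((n - (prior m a).card) *
            (Finset.univ.filter fun σ : Fin k → Equiv.Perm (Fin n) =>
              FreshDup m σ t a).card) := by
            apply Nat.mul_le_mul_left
            apply Nat.mul_le_mul_right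
            omega
        _ ≤ k ^ (m - a.length) * ((prior m a).card * K) :=
            Nat.mul_le_mul_left _ hfc
        _ ≤ k ^ (m - a.length) * ((geoS k (a.length + 1) - 1) * K) := by
            apply Nat.mul_le_mul_left
            exact Nat.mul_le_mul_right _ hq
    calc (n - s) * (∑ σ : Fin k → Equiv.Perm (Fin n), ND σ)
        ≤ (n - s) * ∑ a ∈ PF k m, k ^ (m - a.length) *
            (Finset.univ.filter fun σ : Fin k → Equiv.Perm (Fin n) =>
              FreshDup m σ t a).card := Nat.mul_le_mul_left _ hstep1
      _ = ∑ a ∈ PF k m, (n - s) * (k ^ (m - a.length) *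
            (Finset.univ.filter fun σ : Fin k → Equiv.Perm (Fin n) =>
              FreshDup m σ t a).card) := Finset.mul_sum _ _ _
      _ ≤ ∑ a ∈ PF k m, k ^ (m - a.length) * ((geoS k (a.length + 1) - 1) * K) :=
          Finset.sum_le_sum hstep2
      _ = K * (k ^ m * T) := by
          rw [PF, Finset.sum_biUnion]
          · rw [hT, Finset.mul_sum, Finset.mul_sum]
            apply Finset.sum_congr rfl
            intro ℓ hℓ
            rw [Finset.mem_range] at hℓ
            have hconst : ∀ a ∈ lvlF k ℓ,
                k ^ (m - a.length) * ((geoS k (a.length + 1) - 1) * K)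
                = k ^ (m - ℓ) * ((geoS k (ℓ + 1) - 1) * K) := by
              intro a ha
              rw [mem_lvlF.1 ha]
            rw [Finset.sum_congr rfl hconst, Finset.sum_const, card_lvlF, smul_eq_mul]
            have : k ^ ℓ * (k ^ (m - ℓ) * ((geoS k (ℓ + 1) - 1) * K))
                = (k ^ ℓ * k ^ (m - ℓ)) * ((geoS k (ℓ + 1) - 1) * K) := by ring
            rw [this, ← pow_add, show ℓ + (m - ℓ) = m by omega]
            ring
          · intro i _ l _ hil
            simp only [Finset.disjoint_left, mem_lvlF]
            intro u h1 h2
            exact hil (h1.symm.trans h2)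
  -- pointwise ball bound summed
  have hball : K * k ^ m ≤ (∑ σ : Fin k → Equiv.Perm (Fin n), (Ball t m σ).card)
      + ∑ σ : Fin k → Equiv.Perm (Fin n), ND σ := by
    have := Finset.sum_le_sum
      (f := fun _ : Fin k → Equiv.Perm (Fin n) => k ^ m)
      (g := fun σ => (Ball t m σ).card + ND σ)
      (s := Finset.univ)
      (fun σ _ => ball_ge m hk1 σ t)
    rw [Finset.sum_const, smul_eq_mul, Finset.sum_add_distrib] at this
    calc K * k ^ m = (Finset.univ : Finset (Fin k → Equiv.Perm (Fin n))).card * k ^ m := by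
          rw [Finset.card_univ]
      _ ≤ _ := this
  -- conclude
  have hdup_half : 2 * (∑ σ : Fin k → Equiv.Perm (Fin n), ND σ) ≤ K * k ^ m := by
    have h1 : (n - s) * (2 * (∑ σ : Fin k → Equiv.Perm (Fin n), ND σ))
        ≤ (n - s) * (K * k ^ m) := by
      calc (n - s) * (2 * (∑ σ : Fin k → Equiv.Perm (Fin n), ND σ))
          = 2 * ((n - s) * (∑ σ : Fin k → Equiv.Perm (Fin n), ND σ)) := by ring
        _ ≤ 2 * (K * (k ^ m * T)) := Nat.mul_le_mul_left _ hdupsum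
        _ = (K * k ^ m) * (2 * T) := by ring
        _ ≤ (K * k ^ m) * (n - s) := Nat.mul_le_mul_left _ hT2
        _ = (n - s) * (K * k ^ m) := by ring
    exact Nat.le_of_mul_le_mul_left h1 (by omega)
  omega


/-! ### coding lemma -/

lemma geo_half_sum (N : ℕ) : ∑ i ∈ Finset.range N, ((2:ℝ)⁻¹) ^ i ≤ 2 := by
  have key : ∀ M : ℕ, ∑ i ∈ Finset.range M, ((2:ℝ)⁻¹) ^ i = 2 - 2 * ((2:ℝ)⁻¹) ^ M := by
    intro M
    induction M with
    | zero => simp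
    | succ M ih =>
        rw [Finset.sum_range_succ, ih, pow_succ]
        ring
  rw [key]
  have : (0:ℝ) ≤ ((2:ℝ)⁻¹) ^ N := by positivity
  linarith

lemma sum_four_pow_le {α : Type*} (I : Finset α) (y : α → List Bool)
    (hy : Set.InjOn y I) :
    ∑ a ∈ I, ((4:ℝ)⁻¹) ^ (y a).length ≤ 2 := by
  classical
  set M := I.sup (fun a => (y a).length) with hM
  have hmaps : ∀ a ∈ I, (y a).length ∈ Finset.range (M + 1) := by
    intro a ha
    rw [Finset.mem_range]
    have := Finset.le_sup (f := fun a => (y a).length) ha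
    omega
  have hfib := Finset.sum_fiberwise_of_maps_to (g := fun a => (y a).length)
    (f := fun a => ((4:ℝ)⁻¹) ^ (y a).length) hmaps
  rw [← hfib]
  have hcount : ∀ ℓ ∈ Finset.range (M+1),
      ((I.filter fun a => (y a).length = ℓ).card : ℝ) ≤ (2:ℝ) ^ ℓ := by
    intro ℓ _
    have hinj : Set.InjOn (fun a (i : Fin ℓ) =>
        (y a).getD i.1 false) (I.filter fun a => (y a).length = ℓ) := by
      intro a ha b hb hab
      simp only [Finset.coe_filter, Set.mem_setOf_eq] at ha hb
      apply hy ha.1 hb.1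
      apply List.ext_getElem (by rw [ha.2, hb.2])
      intro i h1 h2
      have := congrFun hab ⟨i, by omega⟩
      simp only at this
      rwa [List.getD_eq_getElem?_getD, List.getD_eq_getElem?_getD,
        List.getElem?_eq_getElem h1, List.getElem?_eq_getElem h2] at this
    have hle := Finset.card_le_card_of_injOn _ (fun a _ => Finset.mem_univ _) hinj
    have hcard : (Finset.univ : Finset (Fin ℓ → Bool)).card = 2 ^ ℓ := by
      rw [Finset.card_univ]
      simp [Fintype.card_fun]
    rw [hcard] at hle
    calc ((I.filter fun a => (y a).length = ℓ).card : ℝ) ≤ ((2:ℕ) ^ ℓ : ℝ) := by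
          exact_mod_cast hle
      _ = (2:ℝ) ^ ℓ := by push_cast; ring
  calc ∑ ℓ ∈ Finset.range (M+1), ∑ a ∈ I.filter (fun a => (y a).length = ℓ),
        ((4:ℝ)⁻¹) ^ (y a).length
      ≤ ∑ ℓ ∈ Finset.range (M+1), ((2:ℝ)⁻¹) ^ ℓ := by
        apply Finset.sum_le_sum
        intro ℓ hℓ
        have heq : ∀ a ∈ I.filter (fun a => (y a).length = ℓ),
            ((4:ℝ)⁻¹) ^ (y a).length = ((4:ℝ)⁻¹) ^ ℓ := by
          intro a ha
          rw [(Finset.mem_filter.1 ha).2]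
        rw [Finset.sum_congr rfl heq, Finset.sum_const, nsmul_eq_mul]
        have h4 : ((4:ℝ)⁻¹) ^ ℓ = ((2:ℝ)⁻¹)^ℓ * ((2:ℝ)⁻¹)^ℓ := by
          rw [← mul_pow]
          norm_num
        calc ((I.filter fun a => (y a).length = ℓ).card : ℝ) * ((4:ℝ)⁻¹) ^ ℓ
            ≤ (2:ℝ)^ℓ * ((4:ℝ)⁻¹) ^ ℓ := by
              apply mul_le_mul_of_nonneg_right (hcount ℓ hℓ)
              positivity
          _ = ((2:ℝ)⁻¹) ^ ℓ := by
              rw [h4, ← mul_assoc, ← mul_pow]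
              norm_num
      _ ≤ 2 := geo_half_sum (M+1)

lemma core_code {T W : Type*} [Fintype T] [Nonempty T] [DecidableEq W]
    (f : T → List Bool) (V : T → W) (μ : T → ℝ)
    (hV : ∀ a b, f a = f b → V a = V b)
    (hμV : ∀ a b, V a = V b → μ a = μ b)
    (hμ : ∀ a, μ a ≤ Real.logb 2 ((Fintype.card T : ℝ) /
      ((Finset.univ.filter fun b => V b = V a).card : ℝ))) :
    ((∑ a, μ a) / (Fintype.card T : ℝ) - 1) / 2
      ≤ (∑ a, ((f a).length : ℝ)) / (Fintype.card T : ℝ) := by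
  classical
  set N : ℝ := (Fintype.card T : ℝ) with hNdef
  have hN : 0 < N := by
    rw [hNdef]
    exact_mod_cast Fintype.card_pos
  set I : Finset W := Finset.univ.image V with hI
  set c : W → ℕ := fun w => (Finset.univ.filter fun b => V b = w).card with hc
  have hex : ∀ w : W, ∃ a : T, w ∈ I →
      (V a = w ∧ ∀ b : T, V b = w → (f a).length ≤ (f b).length) := by
    intro w
    by_cases h : w ∈ I
    · obtain ⟨a0, -, ha0⟩ := Finset.mem_image.1 h
      obtain ⟨a, ha, hmin⟩ := Finset.exists_min_image
        (Finset.univ.filter fun b => V b = w) (fun b => (f b).length)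
        ⟨a0, Finset.mem_filter.2 ⟨Finset.mem_univ _, ha0⟩⟩
      exact ⟨a, fun _ => ⟨(Finset.mem_filter.1 ha).2,
        fun b hb => hmin b (Finset.mem_filter.2 ⟨Finset.mem_univ _, hb⟩)⟩⟩
    · exact ⟨Classical.arbitrary T, fun hc' => absurd hc' h⟩
  choose rep hrep using hex
  have hVrep : ∀ w ∈ I, V (rep w) = w := fun w hw => (hrep w hw).1
  have hcpos : ∀ w ∈ I, 0 < c w := by
    intro w hw
    obtain ⟨a0, -, ha0⟩ := Finset.mem_image.1 hw
    rw [hc]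
    apply Finset.card_pos.2
    exact ⟨a0, Finset.mem_filter.2 ⟨Finset.mem_univ _, ha0⟩⟩
  -- total mass
  have hmass : ∑ w ∈ I, (c w : ℝ) = N := by
    rw [hNdef, ← Finset.card_univ]
    rw [Finset.card_eq_sum_card_fiberwise
      (f := V) (t := I) (fun a _ => Finset.mem_image_of_mem V (Finset.mem_univ a))]
    push_cast
    rfl
  -- minimal lengths bound the total length
  have hlen : ∑ w ∈ I, (c w : ℝ) * ((f (rep w)).length : ℝ)
      ≤ ∑ a, ((f a).length : ℝ) := by
    rw [← Finset.sum_fiberwise_of_maps_to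
      (g := V) (f := fun a => ((f a).length : ℝ))
      (fun a _ => Finset.mem_image_of_mem V (Finset.mem_univ a))]
    apply Finset.sum_le_sum
    intro w hw
    calc (c w : ℝ) * ((f (rep w)).length : ℝ)
        = ∑ _a ∈ Finset.univ.filter (fun b => V b = w), ((f (rep w)).length : ℝ) := by
          rw [Finset.sum_const, nsmul_eq_mul, hc]
      _ ≤ ∑ a ∈ Finset.univ.filter (fun b => V b = w), ((f a).length : ℝ) := by
          apply Finset.sum_le_sum
          intro a ha
          exact_mod_cast (hrep w hw).2 a (Finset.mem_filter.1 ha).2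
  -- injectivity of minimal strings
  have hinj : Set.InjOn (fun w => f (rep w)) I := by
    intro w1 h1 w2 h2 heq
    have := hV _ _ heq
    rw [hVrep w1 h1, hVrep w2 h2] at this
    exact this
  have hq : ∑ w ∈ I, ((4:ℝ)⁻¹) ^ (f (rep w)).length / 2 ≤ 1 := by
    rw [← Finset.sum_div]
    have := sum_four_pow_le I (fun w => f (rep w)) hinj
    linarith
  -- Gibbs
  have hlog2 : (0:ℝ) < Real.log 2 := Real.log_pos (by norm_num)
  set pf : W → ℝ := fun w => (c w : ℝ) / N with hpf
  set qf : W → ℝ := fun w => ((4:ℝ)⁻¹) ^ (f (rep w)).length / 2 with hqf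
  have hppos : ∀ w ∈ I, 0 < pf w := by
    intro w hw
    apply div_pos _ hN
    exact_mod_cast hcpos w hw
  have hqpos : ∀ w, 0 < qf w := by intro w; rw [hqf]; positivity
  have hgibbs : ∑ w ∈ I, pf w * Real.logb 2 (qf w / pf w) ≤ 0 := by
    have hstep : ∀ w ∈ I, pf w * Real.logb 2 (qf w / pf w)
        ≤ (qf w - pf w) / Real.log 2 := by
      intro w hw
      have hp := hppos w hw
      have hq' := hqpos w
      have hlog := Real.log_le_sub_one_of_pos (show 0 < qf w / pf w by positivity)
      have key : pf w * Real.log (qf w / pf w) ≤ qf w - pf w := by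
        calc pf w * Real.log (qf w / pf w) ≤ pf w * (qf w / pf w - 1) :=
              mul_le_mul_of_nonneg_left hlog (le_of_lt hp)
          _ = qf w - pf w := by field_simp
      calc pf w * Real.logb 2 (qf w / pf w)
          = pf w * Real.log (qf w / pf w) / Real.log 2 := by rw [Real.logb]; ring
        _ ≤ (qf w - pf w) / Real.log 2 := by gcongr
    calc ∑ w ∈ I, pf w * Real.logb 2 (qf w / pf w)
        ≤ ∑ w ∈ I, (qf w - pf w) / Real.log 2 := Finset.sum_le_sum hstep
      _ = ((∑ w ∈ I, qf w) - ∑ w ∈ I, pf w) / Real.log 2 := by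
          rw [← Finset.sum_div, Finset.sum_sub_distrib]
      _ ≤ 0 := by
          have hsp : ∑ w ∈ I, pf w = 1 := by
            rw [hpf, ← Finset.sum_div, hmass, div_self (ne_of_gt hN)]
          have hsq : ∑ w ∈ I, qf w ≤ 1 := hq
          apply div_nonpos_of_nonpos_of_nonneg _ (le_of_lt hlog2)
          linarith
  -- per-w logarithm identity
  have hlog4 : Real.logb 2 (4:ℝ) = 2 := by
    rw [show (4:ℝ) = 2 ^ (2:ℕ) by norm_num, Real.logb_pow,
      Real.logb_self_eq_one (by norm_num)]
    norm_num
  have hident : ∀ w ∈ I, Real.logb 2 (qf w / pf w)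
      = Real.logb 2 (N / (c w : ℝ)) - (2 * ((f (rep w)).length : ℝ) + 1) := by
    intro w hw
    have hp := hppos w hw
    have hq' := hqpos w
    have hcne : ((c w : ℝ)) ≠ 0 := by
      have := hcpos w hw
      positivity
    have hqe : Real.logb 2 (qf w) = -(2 * ((f (rep w)).length : ℝ) + 1) := by
      rw [hqf]
      simp only
      rw [Real.logb_div (by positivity) (by norm_num), Real.logb_pow, Real.logb_inv, hlog4,
        Real.logb_self_eq_one (by norm_num)]
      ring
    have hpe : Real.logb 2 (pf w) = Real.logb 2 (c w : ℝ) - Real.logb 2 N := by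
      rw [hpf]
      simp only
      rw [Real.logb_div hcne (ne_of_gt hN)]
    rw [Real.logb_div (ne_of_gt hq') (ne_of_gt hp), hqe, hpe,
      Real.logb_div (ne_of_gt hN) hcne]
    ring
  -- expected μ bound
  have hμsum : (∑ a, μ a) / N = ∑ w ∈ I, pf w * μ (rep w) := by
    rw [← Finset.sum_fiberwise_of_maps_to
      (g := V) (f := fun a => μ a)
      (fun a _ => Finset.mem_image_of_mem V (Finset.mem_univ a)), Finset.sum_div]
    apply Finset.sum_congr rfl
    intro w hw
    have hconst : ∀ a ∈ Finset.univ.filter (fun b => V b = w), μ a = μ (rep w) := by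
      intro a ha
      apply hμV
      rw [(Finset.mem_filter.1 ha).2, hVrep w hw]
    rw [Finset.sum_congr rfl hconst, Finset.sum_const, nsmul_eq_mul, hpf]
    simp only
    rw [hc]
    ring
  have hμle : ∑ w ∈ I, pf w * μ (rep w)
      ≤ ∑ w ∈ I, pf w * (Real.logb 2 (qf w / pf w) + (2 * ((f (rep w)).length : ℝ) + 1)) := by
    apply Finset.sum_le_sum
    intro w hw
    apply mul_le_mul_of_nonneg_left _ (le_of_lt (hppos w hw))
    have h1 := hμ (rep w)
    rw [hVrep w hw] at h1
    rw [hident w hw]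
    have : (Finset.univ.filter fun b => V b = w).card = c w := by rw [hc]
    rw [this] at h1
    linarith
  have hfinal : (∑ a, μ a) / N ≤ 2 * ((∑ a, ((f a).length : ℝ)) / N) + 1 := by
    have hsp : ∑ w ∈ I, pf w = 1 := by
      rw [hpf, ← Finset.sum_div, hmass, div_self (ne_of_gt hN)]
    have hplen : ∑ w ∈ I, pf w * ((f (rep w)).length : ℝ)
        ≤ (∑ a, ((f a).length : ℝ)) / N := by
      rw [div_eq_inv_mul]
      calc ∑ w ∈ I, pf w * ((f (rep w)).length : ℝ)
          = ∑ w ∈ I, N⁻¹ * ((c w : ℝ) * ((f (rep w)).length : ℝ)) := by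
            apply Finset.sum_congr rfl
            intro w _
            rw [hpf]
            simp only
            ring
        _ ≤ _ := by
            rw [← Finset.mul_sum]
            apply mul_le_mul_of_nonneg_left hlen
            positivity
    have hexpand : ∑ w ∈ I, pf w * (Real.logb 2 (qf w / pf w)
          + (2 * ((f (rep w)).length : ℝ) + 1))
        = (∑ w ∈ I, pf w * Real.logb 2 (qf w / pf w))
          + (2 * (∑ w ∈ I, pf w * ((f (rep w)).length : ℝ)) + ∑ w ∈ I, pf w) := by
      have hterm : ∀ w ∈ I, pf w * (Real.logb 2 (qf w / pf w)
            + (2 * ((f (rep w)).length : ℝ) + 1))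
          = pf w * Real.logb 2 (qf w / pf w)
            + (2 * (pf w * ((f (rep w)).length : ℝ)) + pf w) := by
        intro w _
        ring
      rw [Finset.sum_congr rfl hterm, Finset.sum_add_distrib, Finset.sum_add_distrib,
        ← Finset.mul_sum]
    have h2len : (0:ℝ) ≤ (∑ a, ((f a).length : ℝ)) / N := by positivity
    calc (∑ a, μ a) / N = ∑ w ∈ I, pf w * μ (rep w) := hμsum
      _ ≤ ∑ w ∈ I, pf w * (Real.logb 2 (qf w / pf w)
            + (2 * ((f (rep w)).length : ℝ) + 1)) := hμle
      _ = (∑ w ∈ I, pf w * Real.logb 2 (qf w / pf w))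
          + (2 * (∑ w ∈ I, pf w * ((f (rep w)).length : ℝ)) + ∑ w ∈ I, pf w) := hexpand
      _ ≤ 0 + (2 * ((∑ a, ((f a).length : ℝ)) / N) + 1) := by
          have h2 : 2 * (∑ w ∈ I, pf w * ((f (rep w)).length : ℝ))
              ≤ 2 * ((∑ a, ((f a).length : ℝ)) / N) := by linarith
          linarith [hgibbs, hsp]
      _ = 2 * ((∑ a, ((f a).length : ℝ)) / N) + 1 := by ring
  linarith [hfinal]


lemma pow_le_descFactorial (n s : ℕ) : ∀ b, b ≤ s + 1 → (n - s) ^ b ≤ n.descFactorial b := by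
  intro b
  induction b with
  | zero => simp
  | succ b ih =>
      intro hb
      rw [pow_succ, Nat.descFactorial_succ]
      have h1 : (n - s) ≤ n - b := by omega
      calc (n-s)^b * (n-s) ≤ n.descFactorial b * (n - b) :=
            Nat.mul_le_mul (ih (by omega)) h1
        _ = (n - b) * n.descFactorial b := Nat.mul_comm _ _

lemma s_bounds (m : ℕ) (hk : 2 ≤ k) (hn : 1 ≤ n)
    (hcond : (k + 3) * k ^ (m+1) ≤ (k - 1) * n) :
    (k+3) * (geoS k (m+1) - 1) ≤ n ∧ n ≤ k * (n - (geoS k (m+1) - 1)) := by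
  have hk1 : 1 ≤ k := by omega
  set s := geoS k (m + 1) - 1 with hs
  have hgeo : (k - 1) * geoS k (m+1) + 1 = k ^ (m+1) := geoS_mul hk1 _
  have hgeo_pos : 1 ≤ geoS k (m+1) := by
    have h1 : geoS k (m+1) = geoS k m + k ^ m := geoS_succ m
    have h2 : 1 ≤ k ^ m := Nat.one_le_pow _ _ (by omega)
    omega
  have hks : (k - 1) * s = k ^ (m+1) - k := by
    rw [hs, Nat.mul_sub, Nat.mul_one]
    omega
  have hsn : (k + 3) * s ≤ n := by
    have h1 : (k - 1) * ((k+3) * s) = (k+3) * ((k-1) * s) := by ring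
    have h2 : (k - 1) * ((k+3) * s) ≤ (k - 1) * n := by
      rw [h1, hks]
      calc (k+3) * (k ^ (m+1) - k) ≤ (k+3) * k ^ (m+1) := by
            apply Nat.mul_le_mul_left
            omega
        _ ≤ (k-1) * n := hcond
    exact Nat.le_of_mul_le_mul_left h2 (by omega)
  refine ⟨hsn, ?_⟩
  have hsle : s ≤ n := by
    calc s ≤ (k+3) * s := Nat.le_mul_of_pos_left _ (by omega)
      _ ≤ n := hsn
  have hksn : k * s ≤ (k-1) * n := by
    have h1 : (k+3) * (k * s) = k * ((k+3) * s) := by ring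
    have h2 : (k+3) * (k * s) ≤ k * n := by
      rw [h1]
      exact Nat.mul_le_mul_left _ hsn
    have h3 : k * n ≤ (k+3) * ((k-1) * n) := by
      have e1 : (k+3) * ((k-1) * n) = ((k+3) * (k-1)) * n := by ring
      rw [e1]
      apply Nat.mul_le_mul_right
      have : k + 3 ≥ 4 := by omega
      calc k = 1 * k := (Nat.one_mul k).symm
        _ ≤ (k-1) * (k+3) := Nat.mul_le_mul (by omega) (by omega)
        _ = (k+3) * (k-1) := Nat.mul_comm _ _
    exact Nat.le_of_mul_le_mul_left (le_trans h2 h3) (by omega)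
  have h5 : k * (n - s) = k * n - k * s := Nat.mul_sub _ _ _
  have hkn : k * n = n + (k-1) * n := by
    obtain ⟨j, rfl⟩ := Nat.exists_eq_add_of_le hk1
    have e : 1 + j - 1 = j := by omega
    rw [e]
    ring
  omega

set_option maxHeartbeats 1000000 in
lemma mu_le (L : ℕ) (hn : 2 ≤ n) (hk : 2 ≤ k) (hLpos : 0 < L)
    (hnat : (k+3) * k^L ≤ (k-1)*n) (t : Fin n) (σ : Fin k → Equiv.Perm (Fin n)) :
    ((k * (Ball t (L-1) σ).card : ℕ) : ℝ) * Real.logb 2 ((n:ℝ)/k)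
      ≤ Real.logb 2 ((Fintype.card (Fin k → Equiv.Perm (Fin n)) : ℝ) /
          ((Finset.univ.filter fun σ' : Fin k → Equiv.Perm (Fin n) =>
            (fun u : {u // u ∈ PF k L} => nu σ' t u.1)
              = (fun u : {u // u ∈ PF k L} => nu σ t u.1)).card : ℝ)) := by
  classical
  have hk1 : 1 ≤ k := by omega
  have hkR : (0:ℝ) < (k:ℝ) := by exact_mod_cast (by omega : 0 < k)
  have hm1 : L - 1 + 1 = L := by omega
  have hcond : (k + 3) * k ^ ((L-1)+1) ≤ (k - 1) * n := by rw [hm1]; exact hnat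
  obtain ⟨hsn, hkn⟩ := s_bounds (L-1) hk (by omega) hcond
  set s := geoS k ((L-1)+1) - 1 with hsdef
  have hgeo_pos : 1 ≤ geoS k ((L-1)+1) := by
    have h1 : geoS k ((L-1)+1) = geoS k (L-1) + k ^ (L-1) := geoS_succ _
    have h2 : 1 ≤ k ^ (L-1) := Nat.one_le_pow _ _ (by omega)
    omega
  have hslt : s < n := by
    by_contra hc
    push_neg at hc
    have h1 : (k+3) * n ≤ (k+3) * s := Nat.mul_le_mul_left _ hc
    have h2 : (k+3) * n ≤ n := le_trans h1 hsn
    nlinarith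
  set bb := (Ball t (L-1) σ).card with hbb
  have hfeq : (Finset.univ.filter fun σ' : Fin k → Equiv.Perm (Fin n) =>
      (fun u : {u // u ∈ PF k L} => nu σ' t u.1)
        = (fun u : {u // u ∈ PF k L} => nu σ t u.1))
      = (Finset.univ.filter fun σ' : Fin k → Equiv.Perm (Fin n) =>
          ∀ u ∈ PF k L, nu σ' t u = nu σ t u) := by
    apply Finset.filter_congr
    intro σ' _
    rw [funext_iff]
    constructor
    · intro h u hu; exact h ⟨u, hu⟩
    · intro h u; exact h u.1 u.2
  have hfibpos : 0 < (Finset.univ.filter fun σ' : Fin k → Equiv.Perm (Fin n) =>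
      (fun u : {u // u ∈ PF k L} => nu σ' t u.1)
        = (fun u : {u // u ∈ PF k L} => nu σ t u.1)).card := by
    apply Finset.card_pos.2
    exact ⟨σ, Finset.mem_filter.2 ⟨Finset.mem_univ _, rfl⟩⟩
  have hfib_le : (Finset.univ.filter fun σ' : Fin k → Equiv.Perm (Fin n) =>
      (fun u : {u // u ∈ PF k L} => nu σ' t u.1)
        = (fun u : {u // u ∈ PF k L} => nu σ t u.1)).card
      ≤ ((n - bb).factorial) ^ k := by
    rw [hfeq]
    exact fiber_card_le t (by omega) σ
  have hble : bb ≤ s + 1 := by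
    rw [hbb]
    calc (Ball t (L-1) σ).card ≤ (PF k (L-1)).card := Finset.card_image_le
      _ = geoS k ((L-1)+1) := card_PF _
      _ = s + 1 := by omega
  have hb_n : bb ≤ n := by omega
  have hdesc : (n - s)^bb * (n - bb).factorial ≤ n.factorial := by
    calc (n - s)^bb * (n - bb).factorial
        ≤ n.descFactorial bb * (n - bb).factorial :=
          Nat.mul_le_mul_right _ (pow_le_descFactorial n s bb hble)
      _ = n.factorial := by
          rw [Nat.mul_comm]
          exact Nat.factorial_mul_descFactorial hb_n
  have hnat2 : (n - s)^(k * bb) *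
      (Finset.univ.filter fun σ' : Fin k → Equiv.Perm (Fin n) =>
        (fun u : {u // u ∈ PF k L} => nu σ' t u.1)
          = (fun u : {u // u ∈ PF k L} => nu σ t u.1)).card
      ≤ (n.factorial) ^ k := by
    calc (n - s)^(k * bb) * _ ≤ (n - s)^(k*bb) * ((n - bb).factorial) ^ k :=
          Nat.mul_le_mul_left _ hfib_le
      _ = ((n-s)^bb * (n - bb).factorial)^k := by
          rw [Nat.mul_comm k bb, pow_mul, ← Nat.mul_pow]
      _ ≤ (n.factorial)^k := Nat.pow_le_pow_left hdesc k
  have hcardK : Fintype.card (Fin k → Equiv.Perm (Fin n)) = (n.factorial)^k := by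
    rw [Fintype.card_fun, Fintype.card_perm, Fintype.card_fin, Fintype.card_fin]
  have hnk : (n:ℝ)/k ≤ ((n - s : ℕ) : ℝ) := by
    rw [div_le_iff₀ hkR]
    calc (n:ℝ) = ((n:ℕ):ℝ) := by norm_num
      _ ≤ ((k * (n - s) : ℕ) : ℝ) := by exact_mod_cast hkn
      _ = ((n - s : ℕ):ℝ) * k := by push_cast; ring
  have hnk0 : (0:ℝ) < (n:ℝ)/k := by positivity
  have hpow : ((n:ℝ)/k)^(k*bb) ≤
      (Fintype.card (Fin k → Equiv.Perm (Fin n)) : ℝ) /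
      ((Finset.univ.filter fun σ' : Fin k → Equiv.Perm (Fin n) =>
        (fun u : {u // u ∈ PF k L} => nu σ' t u.1)
          = (fun u : {u // u ∈ PF k L} => nu σ t u.1)).card : ℝ) := by
    rw [le_div_iff₀ (by exact_mod_cast hfibpos)]
    calc ((n:ℝ)/k)^(k*bb) * _ ≤ ((n - s:ℕ):ℝ)^(k*bb) * _ := by
          apply mul_le_mul_of_nonneg_right (pow_le_pow_left₀ (le_of_lt hnk0) hnk _)
          positivity
      _ ≤ ((n.factorial ^ k : ℕ) : ℝ) := by
          exact_mod_cast hnat2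
      _ = (Fintype.card (Fin k → Equiv.Perm (Fin n)) : ℝ) := by
          rw [hcardK]
  calc ((k * bb : ℕ) : ℝ) * Real.logb 2 ((n:ℝ)/k)
      = Real.logb 2 (((n:ℝ)/k)^(k*bb)) := by
        rw [Real.logb_pow]
        try push_cast
        try ring
    _ ≤ _ := Real.logb_le_logb_of_le (by norm_num) (by positivity) hpow

set_option maxHeartbeats 1000000 in
lemma per_t (L : ℕ) (hn : 2 ≤ n) (hk : 2 ≤ k) (hLpos : 0 < L)
    (hnat : (k+3) * k^L ≤ (k-1)*n)
    (x : (Fin k → Equiv.Perm (Fin n)) → Fin n → List Bool)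
    (hdet : ∀ (σ σ' : Fin k → Equiv.Perm (Fin n)) (t : Fin n), x σ t = x σ' t →
      ∀ u ∈ PF k L, nu σ t u = nu σ' t u)
    (t : Fin n) :
    (1:ℝ)/4 * (k:ℝ)^L * Real.logb 2 ((n:ℝ)/k) - 1/2 ≤
      (∑ σ : Fin k → Equiv.Perm (Fin n), ((x σ t).length : ℝ)) /
        (Fintype.card (Fin k → Equiv.Perm (Fin n)) : ℝ) := by
  classical
  have hk1 : 1 ≤ k := by omega
  have hKR : (0:ℝ) < (Fintype.card (Fin k → Equiv.Perm (Fin n)) : ℝ) := by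
    exact_mod_cast (Fintype.card_pos : 0 < Fintype.card (Fin k → Equiv.Perm (Fin n)))
  have hkR : (0:ℝ) < (k:ℝ) := by exact_mod_cast (by omega : 0 < k)
  have hm1 : L - 1 + 1 = L := by omega
  have hcond : (k + 3) * k ^ ((L-1)+1) ≤ (k - 1) * n := by rw [hm1]; exact hnat
  set l : ℝ := Real.logb 2 ((n : ℝ) / k) with hldef
  have hklen : k ≤ n := by
    have h1 : k ≤ k^L := Nat.le_self_pow (by omega) k
    have h2 : (k+3) * k^L ≤ (k+3) * n := by
      calc (k+3) * k^L ≤ (k-1) * n := hnat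
        _ ≤ (k+3) * n := Nat.mul_le_mul_right _ (by omega)
    have h3 : k^L ≤ n := Nat.le_of_mul_le_mul_left h2 (by omega)
    omega
  have hlnn : 0 ≤ l := by
    rw [hldef]
    apply Real.logb_nonneg (by norm_num)
    rw [le_div_iff₀ hkR]
    exact_mod_cast by omega
  have hNE2 : Nonempty (Fin k → Equiv.Perm (Fin n)) := ⟨fun _ => 1⟩
  have hcc := core_code (T := Fin k → Equiv.Perm (Fin n))
    (W := {u // u ∈ PF k L} → Fin n)
    (f := fun σ => x σ t)
    (V := fun σ => fun u : {u // u ∈ PF k L} => nu σ t u.1)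
    (μ := fun σ => ((k * (Ball t (L-1) σ).card : ℕ) : ℝ) * l)
    (by
      intro a b hfab
      funext u
      exact hdet a b t hfab u.1 u.2)
    (by
      intro a b hVab
      have hBall : Ball t (L-1) a = Ball t (L-1) b := by
        apply Ball_congr t (by omega : L - 1 ≤ L)
        intro u hu
        exact congrFun hVab ⟨u, hu⟩
      simp only [hBall])
    (by
      intro σ
      have h1 := mu_le L hn hk hLpos hnat t σ
      rw [hldef]
      exact h1)
  have hsball := sum_ball_ge (L-1) hk (by omega : 1 ≤ n) t hcond
  have hsum_mu : (∑ σ : Fin k → Equiv.Perm (Fin n),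
      ((k * (Ball t (L-1) σ).card : ℕ) : ℝ) * l)
      / (Fintype.card (Fin k → Equiv.Perm (Fin n)) : ℝ)
      ≥ 1/2 * (k:ℝ)^L * l := by
    have h1 : (∑ σ : Fin k → Equiv.Perm (Fin n),
        ((k * (Ball t (L-1) σ).card : ℕ) : ℝ))
        = (k:ℝ) * ∑ σ : Fin k → Equiv.Perm (Fin n), ((Ball t (L-1) σ).card : ℝ) := by
      rw [Finset.mul_sum]
      apply Finset.sum_congr rfl
      intro σ _
      push_cast
      ring
    have h2 : (Fintype.card (Fin k → Equiv.Perm (Fin n)) : ℝ) * (k:ℝ)^(L-1)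
        ≤ 2 * ∑ σ : Fin k → Equiv.Perm (Fin n), ((Ball t (L-1) σ).card : ℝ) := by
      exact_mod_cast hsball
    have h3 : (∑ σ : Fin k → Equiv.Perm (Fin n),
        ((k * (Ball t (L-1) σ).card : ℕ) : ℝ) * l)
        = ((k:ℝ) * ∑ σ : Fin k → Equiv.Perm (Fin n), ((Ball t (L-1) σ).card : ℝ)) * l := by
      rw [← h1, ← Finset.sum_mul]
    rw [h3, ge_iff_le, le_div_iff₀ hKR]
    have hkpow : (k:ℝ) * (k:ℝ)^(L-1) = (k:ℝ)^L := by
      rw [← pow_succ', hm1]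
    have hstep := mul_le_mul_of_nonneg_right h2 hlnn
    have hfin2 : 1/2 * (k:ℝ)^L * l * (Fintype.card (Fin k → Equiv.Perm (Fin n)) : ℝ)
        ≤ ((k:ℝ) * ∑ σ : Fin k → Equiv.Perm (Fin n), ((Ball t (L-1) σ).card : ℝ)) * l := by
      calc 1/2 * (k:ℝ)^L * l * (Fintype.card (Fin k → Equiv.Perm (Fin n)) : ℝ)
          = ((k:ℝ)/2) * ((Fintype.card (Fin k → Equiv.Perm (Fin n)) : ℝ)
              * (k:ℝ)^(L-1) * l) := by rw [← hkpow]; ring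
        _ ≤ ((k:ℝ)/2) * ((2 * ∑ σ : Fin k → Equiv.Perm (Fin n),
              ((Ball t (L-1) σ).card : ℝ)) * l) := by
            apply mul_le_mul_of_nonneg_left hstep
            positivity
        _ = ((k:ℝ) * ∑ σ : Fin k → Equiv.Perm (Fin n),
              ((Ball t (L-1) σ).card : ℝ)) * l := by ring
    linarith [hfin2]
  calc (1:ℝ)/4 * (k:ℝ)^L * l - 1/2
      = ((1/2 * (k:ℝ)^L * l) - 1) / 2 := by ring
    _ ≤ ((∑ σ : Fin k → Equiv.Perm (Fin n),
          ((k * (Ball t (L-1) σ).card : ℕ) : ℝ) * l)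
          / (Fintype.card (Fin k → Equiv.Perm (Fin n)) : ℝ) - 1) / 2 := by
        linarith [hsum_mu]
    _ ≤ _ := hcc

end RTG

open RTG in
set_option maxHeartbeats 1000000 in
/-- Hardness of dense retrieval for relation-tracing graphs: any decision function `D`
fixed before sampling, together with graph-dependent binary node features `x` that decide
all queries of length at most `L` correctly, must use expected average feature length at
least `(1/4)·k^L·log₂(n/k) − 1/2`. -/
theorem stmt0 (n k L : ℕ) (hn : 2 ≤ n) (hk : 2 ≤ k)
    (hkL : (k : ℝ) ^ L ≤ ((k : ℝ) - 1) / ((k : ℝ) + 3) * n)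
    (D : List Bool → Fin n → List (Fin k) → Bool)
    (x : (Fin k → Equiv.Perm (Fin n)) → Fin n → List Bool)
    (hD : ∀ (σ : Fin k → Equiv.Perm (Fin n)) (t s : Fin n) (r : List (Fin k)),
      r.length ≤ L → (D (x σ t) s r = true ↔ t = traceP σ r s)) :
    (1 : ℝ) / 4 * (k : ℝ) ^ L * Real.logb 2 ((n : ℝ) / k) - 1 / 2 ≤
      (∑ σ : Fin k → Equiv.Perm (Fin n),
          (1 / (n : ℝ)) * ∑ t : Fin n, ((x σ t).length : ℝ)) /
        (Fintype.card (Fin k → Equiv.Perm (Fin n)) : ℝ) := by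
  classical
  have hk1 : 1 ≤ k := by omega
  have hKpos : 0 < Fintype.card (Fin k → Equiv.Perm (Fin n)) := Fintype.card_pos
  have hKR : (0:ℝ) < (Fintype.card (Fin k → Equiv.Perm (Fin n)) : ℝ) := by
    exact_mod_cast hKpos
  have hnR : (0:ℝ) < (n:ℝ) := by exact_mod_cast (by omega : 0 < n)
  have hkR : (0:ℝ) < (k:ℝ) := by exact_mod_cast (by omega : 0 < k)
  have hNE : Nonempty (Fin n) := ⟨⟨0, by omega⟩⟩
  set l : ℝ := Real.logb 2 ((n : ℝ) / k) with hldef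
  have hdet : ∀ (σ σ' : Fin k → Equiv.Perm (Fin n)) (t : Fin n), x σ t = x σ' t →
      ∀ u ∈ PF k L, nu σ t u = nu σ' t u := by
    intro σ σ' t hx u hu
    have hlen : u.length ≤ L := mem_PF.1 hu
    have h1 : D (x σ t) (nu σ t u) u = true :=
      (hD σ t (nu σ t u) u hlen).2 (by rw [nu, Equiv.Perm.coe_inv, Equiv.apply_symm_apply])
    rw [hx] at h1
    have h2 := (hD σ' t (nu σ t u) u hlen).1 h1
    have h3 : nu σ' t u = nu σ t u := by
      have h4 := congrArg (fun z => (traceP σ' u)⁻¹ z) h2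
      simpa [nu] using h4
    exact h3.symm
  rcases Nat.eq_zero_or_pos L with hL0 | hLpos
  · -- case L = 0
    subst hL0
    have hbase : ∀ σ : Fin k → Equiv.Perm (Fin n),
        (1:ℝ)/4 * (k:ℝ)^(0:ℕ) * l - 1/2 ≤ (1/(n:ℝ)) * ∑ t : Fin n, ((x σ t).length : ℝ) := by
      intro σ
      have hcc := core_code (T := Fin n) (W := Fin n) (f := x σ) (V := id)
        (μ := fun _ => Real.logb 2 (n:ℝ))
        (by
          intro a b hfab
          have h1 : D (x σ a) a [] = true :=
            (hD σ a a [] (by simp)).2 (by simp [traceP])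
          rw [hfab] at h1
          have h2 := (hD σ b a [] (by simp)).1 h1
          simp only [traceP] at h2
          simpa using h2.symm)
        (fun _ _ _ => rfl)
        (by
          intro a
          have hfil : (Finset.univ.filter fun b : Fin n => id b = id a) = {a} := by
            ext b
            simp [eq_comm]
          rw [hfil]
          simp only [Finset.card_singleton, Nat.cast_one, Fintype.card_fin]
          rw [div_one])
      rw [Fintype.card_fin] at hcc
      have hmu : (∑ _a : Fin n, Real.logb 2 (n:ℝ)) / (n:ℝ) = Real.logb 2 (n:ℝ) := by
        rw [Finset.sum_const, Finset.card_univ, Fintype.card_fin, nsmul_eq_mul]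
        field_simp
      rw [hmu] at hcc
      have hln : (0:ℝ) ≤ Real.logb 2 (n:ℝ) :=
        Real.logb_nonneg (by norm_num) (by exact_mod_cast (by omega : 1 ≤ n))
      have hll : l ≤ Real.logb 2 (n:ℝ) := by
        rw [hldef]
        apply Real.logb_le_logb_of_le (by norm_num : (1:ℝ) < 2) (by positivity)
        rw [div_le_iff₀ hkR]
        nlinarith [hnR, hkR, (by exact_mod_cast hk1 : (1:ℝ) ≤ (k:ℝ))]
      have hquarter : (1:ℝ)/4 * l ≤ 1/2 * Real.logb 2 (n:ℝ) := by
        rcases le_or_gt l 0 with h | h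
        · nlinarith
        · nlinarith
      have hfin : (1/(n:ℝ)) * ∑ t : Fin n, ((x σ t).length : ℝ)
          = (∑ t : Fin n, ((x σ t).length : ℝ)) / (n:ℝ) := by ring
      rw [hfin]
      calc (1:ℝ)/4 * (k:ℝ)^(0:ℕ) * l - 1/2
          = 1/4 * l - 1/2 := by rw [pow_zero]; ring
        _ ≤ (Real.logb 2 (n:ℝ) - 1)/2 := by linarith
        _ ≤ _ := hcc
    rw [le_div_iff₀ hKR]
    calc ((1:ℝ)/4 * (k:ℝ)^(0:ℕ) * l - 1/2) * (Fintype.card (Fin k → Equiv.Perm (Fin n)) : ℝ)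
        = ∑ _σ : Fin k → Equiv.Perm (Fin n), ((1:ℝ)/4 * (k:ℝ)^(0:ℕ) * l - 1/2) := by
          rw [Finset.sum_const, Finset.card_univ, nsmul_eq_mul]
          ring
      _ ≤ _ := Finset.sum_le_sum (fun σ _ => hbase σ)
  · -- case L ≥ 1
    have hcast : ((k:ℝ)+3) * (k:ℝ)^L ≤ ((k:ℝ)-1) * n := by
      have h3 : (0:ℝ) < (k:ℝ)+3 := by positivity
      calc ((k:ℝ)+3) * (k:ℝ)^L ≤ ((k:ℝ)+3) * (((k:ℝ)-1)/((k:ℝ)+3) * n) :=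
            mul_le_mul_of_nonneg_left hkL (le_of_lt h3)
        _ = ((k:ℝ)-1) * n := by field_simp
    have hnat : (k+3) * k^L ≤ (k-1) * n := by
      have h2 : (((k+3) * k^L : ℕ) : ℝ) ≤ (((k-1)*n : ℕ) : ℝ) := by
        push_cast [Nat.cast_sub hk1]
        exact hcast
      exact_mod_cast h2
    have hpt := per_t L hn hk hLpos hnat x hdet
    have hswap : (∑ σ : Fin k → Equiv.Perm (Fin n),
        (1 / (n : ℝ)) * ∑ t : Fin n, ((x σ t).length : ℝ)) /
          (Fintype.card (Fin k → Equiv.Perm (Fin n)) : ℝ)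
        = (1/(n:ℝ)) * ∑ t : Fin n,
            ((∑ σ : Fin k → Equiv.Perm (Fin n), ((x σ t).length : ℝ)) /
              (Fintype.card (Fin k → Equiv.Perm (Fin n)) : ℝ)) := by
      rw [← Finset.mul_sum, Finset.sum_comm]
      rw [← Finset.sum_div]
      field_simp
      try ring
    rw [hswap]
    have hsum_t : ∑ t : Fin n, ((1:ℝ)/4 * (k:ℝ)^L * l - 1/2)
        ≤ ∑ t : Fin n,
            ((∑ σ : Fin k → Equiv.Perm (Fin n), ((x σ t).length : ℝ)) /
              (Fintype.card (Fin k → Equiv.Perm (Fin n)) : ℝ)) :=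
      Finset.sum_le_sum (fun t _ => hpt t)
    rw [Finset.sum_const, Finset.card_univ, Fintype.card_fin, nsmul_eq_mul] at hsum_t
    calc (1:ℝ)/4 * (k:ℝ)^L * l - 1/2
        = (1/(n:ℝ)) * ((n:ℝ) * ((1:ℝ)/4 * (k:ℝ)^L * l - 1/2)) := by
          field_simp
      _ ≤ _ := by
          apply mul_le_mul_of_nonneg_left hsum_t
          positivity
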